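/- Let G be a unit ball graph on a point set, let I be a maximal independent set of G, and for each w ∈ I let S_w be a (1+ε)-spanner of the induced unit ball graph on the 2-hop neighborhood N²(w). Then the union S = ⋃_{w∈I} S_w is a (1+ε)-spanner of G. -/

import Mathlib

open Classical

noncomputable section

/-- The length of a path given as a list of points: the sum of the metric
distances of consecutive points. -/
def chainLength {X : Type*} [PseudoMetricSpace X] : List X → ℝ
  | [] => 0
  | [_] => 0
  | a :: b :: rest => dist a b + chainLength (b :: rest)

/-- `p` is a path from `u` to `v` using only (undirected) edges from `E`. -/
def IsPathIn {X : Type*} (E : Set (X × X)) (p : List X) (u v : X) : Prop :=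
  p ≠ [] ∧ p.head? = some u ∧ p.getLast? = some v ∧
    p.Chain' (fun a b => (a, b) ∈ E ∨ (b, a) ∈ E)

/-- The edge set of the unit ball graph on the point set `V`: two distinct
points of `V` are adjacent exactly when their distance is at most `1`. -/
def ubgEdges {X : Type*} [PseudoMetricSpace X] (V : Set X) : Set (X × X) :=
  {e | e.1 ∈ V ∧ e.2 ∈ V ∧ e.1 ≠ e.2 ∧ dist e.1 e.2 ≤ 1}

/-- `v` is within `k` hops of `w` in the unit ball graph on `V`. -/
def HopLe {X : Type*} [PseudoMetricSpace X] (V : Set X) (w v : X) (k : ℕ) : Prop :=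
  ∃ p : List X, IsPathIn (ubgEdges V) p w v ∧ (∀ x ∈ p, x ∈ V) ∧ p.length ≤ k + 1

/-- `S` is an `s`-spanner of the graph with vertex set `V` and edge set `E`:
`S` is a sub-edge-set of `E`, and every path in `E` between two vertices can be
replaced by a path in `S` that is at most `s` times longer. (Equivalently,
`dist_S(u,v) ≤ s · dist_E(u,v)` for all `u, v ∈ V`.) -/
def IsSpannerOf {X : Type*} [PseudoMetricSpace X] (V : Set X)
    (E S : Set (X × X)) (s : ℝ) : Prop :=
  S ⊆ E ∧ ∀ u ∈ V, ∀ v ∈ V, ∀ p : List X, IsPathIn E p u v →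
    ∃ q : List X, IsPathIn S q u v ∧ chainLength q ≤ s * chainLength p

/-- The 2-hop neighborhood of `w` in the unit ball graph on `V`. -/
def twoHop {X : Type*} [PseudoMetricSpace X] (V : Set X) (w : X) : Set X :=
  {v | HopLe V w v 2}

lemma chainLength_nonneg {X : Type*} [PseudoMetricSpace X] : ∀ p : List X, 0 ≤ chainLength p
  | [] => le_refl 0
  | [_] => le_refl 0
  | a :: b :: rest => by
      have := chainLength_nonneg (b :: rest)
      have := dist_nonneg (x := a) (y := b)
      simp only [chainLength]; linarith

lemma chainLength_append {X : Type*} [PseudoMetricSpace X] :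
    ∀ (q1 q2 : List X) (m : X), q1.getLast? = some m → q2.head? = some m →
      chainLength (q1 ++ q2.tail) = chainLength q1 + chainLength q2
  | [], _, _, h, _ => by simp at h
  | [x], q2, m, h, h2 => by
      simp only [List.getLast?_singleton, Option.some.injEq] at h
      subst h
      cases q2 with
      | nil => simp at h2
      | cons y t =>
          simp only [List.head?_cons, Option.some.injEq] at h2
          subst h2
          simp [chainLength]
  | x :: y :: r, q2, m, h, h2 => by
      have ih := chainLength_append (y :: r) q2 m (by simpa using h) h2
      simp only [List.cons_append] at ih ⊢
      simp only [chainLength] at *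
      linarith [ih]

lemma IsPathIn.mono {X : Type*} {E E' : Set (X × X)} {p : List X} {u v : X}
    (hE : E ⊆ E') (h : IsPathIn E p u v) : IsPathIn E' p u v := by
  refine ⟨h.1, h.2.1, h.2.2.1, h.2.2.2.imp ?_⟩
  intro a b hab
  exact hab.imp (fun h => hE h) (fun h => hE h)

lemma IsPathIn.append {X : Type*} {E : Set (X × X)} {q1 q2 : List X} {u m v : X}
    (h1 : IsPathIn E q1 u m) (h2 : IsPathIn E q2 m v) :
    IsPathIn E (q1 ++ q2.tail) u v := by
  obtain ⟨hne1, hh1, hl1, hc1⟩ := h1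
  obtain ⟨hne2, hh2, hl2, hc2⟩ := h2
  cases q2 with
  | nil => simp at hh2
  | cons y t =>
      simp only [List.head?_cons, Option.some.injEq] at hh2
      subst hh2
      refine ⟨by simp [hne1], ?_, ?_, ?_⟩
      · cases q1 with
        | nil => exact absurd rfl hne1
        | cons a s => simpa using hh1
      · cases t with
        | nil =>
            simp only [List.getLast?_singleton, Option.some.injEq] at hl2
            subst hl2
            simpa using hl1
        | cons z t' =>
            have hzt : (z :: t').getLast? = some v := by simpa using hl2
            rw [List.tail_cons, List.getLast?_append, hzt]
            rfl
      · rw [List.Chain', List.isChain_append]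
        refine ⟨hc1, hc2.tail, ?_⟩
        intro x hx y hy
        rw [hl1, Option.mem_some_iff] at hx
        subst hx
        rcases List.isChain_cons.mp hc2 with ⟨hR, _⟩
        exact hR y hy

lemma twoHop_subset {X : Type*} [PseudoMetricSpace X] (V : Set X) (w : X) :
    twoHop V w ⊆ V := by
  rintro v ⟨p, hp, hvp, _⟩
  exact hvp v (List.mem_of_mem_getLast? (by simp [hp.2.2.1]))

lemma mem_twoHop_of {X : Type*} [PseudoMetricSpace X] {V : Set X} {w u b : X}
    (hw : w ∈ V) (hu : u ∈ V) (hb : b ∈ V)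
    (h1 : dist w u ≤ 1) (h2 : dist u b ≤ 1) : b ∈ twoHop V w := by
  by_cases hwb : w = b
  · subst hwb
    exact ⟨[w], ⟨by simp, by simp, by simp, List.isChain_singleton _⟩, by simpa using hw, by simp⟩
  · by_cases hwu : w = u
    · subst hwu
      exact ⟨[w, b], ⟨by simp, by simp, by simp, by
          simp only [List.Chain', List.isChain_cons_cons, List.isChain_singleton, and_true]
          exact Or.inl ⟨hw, hb, hwb, h2⟩⟩,
        by intro x hx; simp at hx; rcases hx with rfl | rfl <;> assumption, by simp⟩
    · by_cases hub : u = b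
      · subst hub
        exact ⟨[w, u], ⟨by simp, by simp, by simp, by
            simp only [List.Chain', List.isChain_cons_cons, List.isChain_singleton, and_true]
            exact Or.inl ⟨hw, hu, hwu, h1⟩⟩,
          by intro x hx; simp at hx; rcases hx with rfl | rfl <;> assumption, by simp⟩
      · exact ⟨[w, u, b], ⟨by simp, by simp, by simp, by
            simp only [List.Chain', List.isChain_cons_cons, List.isChain_singleton, and_true]
            exact ⟨Or.inl ⟨hw, hu, hwu, h1⟩, Or.inl ⟨hu, hb, hub, h2⟩⟩⟩,
          by intro x hx; simp at hx; rcases hx with rfl | rfl | rfl <;> assumption, by simp⟩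

/-- Let `G` be the unit ball graph on `V`, `I` a maximal independent set of `G`,
and for each `w ∈ I` let `S w` be a `(1+ε)`-spanner of the induced unit ball
graph on the 2-hop neighborhood `N²(w)`. Then `⋃_{w∈I} S w` is a
`(1+ε)`-spanner of `G`. -/
theorem union_of_local_spanners {X : Type*} [MetricSpace X]
    {ε : ℝ} (hε : 0 < ε) (V I : Set X) (hIV : I ⊆ V)
    (hind : I.Pairwise fun a b => 1 < dist a b)
    (hmax : ∀ v ∈ V, v ∈ I ∨ ∃ w ∈ I, w ≠ v ∧ dist v w ≤ 1)
    (S : X → Set (X × X))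
    (hS : ∀ w ∈ I, IsSpannerOf (twoHop V w) (ubgEdges (twoHop V w)) (S w) (1 + ε)) :
    IsSpannerOf V (ubgEdges V) (⋃ w ∈ I, S w) (1 + ε) := by
  have hsub : (⋃ w ∈ I, S w) ⊆ ubgEdges V := by
    intro e he
    simp only [Set.mem_iUnion] at he
    obtain ⟨w, hw, hew⟩ := he
    have h := (hS w hw).1 hew
    exact ⟨twoHop_subset V w h.1, twoHop_subset V w h.2.1, h.2.2.1, h.2.2.2⟩
  -- spanner path for a single edge
  have hedge : ∀ u ∈ V, ∀ b ∈ V, u ≠ b → dist u b ≤ 1 →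
      ∃ q : List X, IsPathIn (⋃ w ∈ I, S w) q u b ∧
        chainLength q ≤ (1 + ε) * dist u b := by
    intro u hu b hb hne hd
    obtain ⟨w, hwI, hdw⟩ : ∃ w ∈ I, dist w u ≤ 1 := by
      rcases hmax u hu with h | ⟨w, hwI, _, hdw⟩
      · exact ⟨u, h, by simp⟩
      · exact ⟨w, hwI, by rwa [dist_comm]⟩
    have hwV : w ∈ V := hIV hwI
    have huT : u ∈ twoHop V w := mem_twoHop_of hwV hu hu hdw (by simp)
    have hbT : b ∈ twoHop V w := mem_twoHop_of hwV hu hb hdw hd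
    have hpath : IsPathIn (ubgEdges (twoHop V w)) [u, b] u b :=
      ⟨by simp, by simp, by simp, by
        simp only [List.Chain', List.isChain_cons_cons, List.isChain_singleton, and_true]
        exact Or.inl ⟨huT, hbT, hne, hd⟩⟩
    obtain ⟨q, hq, hql⟩ := (hS w hwI).2 u huT b hbT [u, b] hpath
    refine ⟨q, hq.mono ?_, by
      simpa only [chainLength, add_zero] using hql⟩
    intro e he
    exact Set.mem_iUnion.mpr ⟨w, Set.mem_iUnion.mpr ⟨hwI, he⟩⟩
  refine ⟨hsub, ?_⟩
  intro u hu v hv p hp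
  clear hind
  induction p generalizing u with
  | nil => exact absurd hp.1 (by simp)
  | cons a rest ih =>
    obtain ⟨_, hh, hl, hc⟩ := hp
    simp only [List.head?_cons, Option.some.injEq] at hh
    subst hh
    cases rest with
    | nil =>
        simp only [List.getLast?_singleton, Option.some.injEq] at hl
        refine ⟨[a], ⟨by simp, by simp, by simp [hl], List.isChain_singleton _⟩, ?_⟩
        simp only [chainLength]
        nlinarith
    | cons b rest' =>
        rcases List.isChain_cons_cons.mp hc with ⟨heb, hc'⟩
        have hbV : b ∈ V := by
          rcases heb with h | h
          · exact h.2.1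
          · exact h.1
        have hne : a ≠ b := by
          rcases heb with h | h
          · exact h.2.2.1
          · exact fun e => h.2.2.1 e.symm
        have hd : dist a b ≤ 1 := by
          rcases heb with h | h
          · exact h.2.2.2
          · rw [dist_comm]; exact h.2.2.2
        have hp' : IsPathIn (ubgEdges V) (b :: rest') b v :=
          ⟨by simp, by simp, by simpa using hl, hc'⟩
        obtain ⟨q2, hq2, hq2l⟩ := ih b hbV hp'
        obtain ⟨q1, hq1, hq1l⟩ := hedge a hu b hbV hne hd
        refine ⟨q1 ++ q2.tail, hq1.append hq2, ?_⟩
        rw [chainLength_append q1 q2 b hq1.2.2.1 hq2.2.1]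
        simp only [chainLength]
        nlinarith [dist_nonneg (x := a) (y := b), chainLength_nonneg (b :: rest')]


end
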